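/- Suppose X ∈ T(N) and X ∉ I⁻_{N₀} for some N₀ ∈ N with N₀ = N₀⁻ > 0. Then there exist A, B ∈ T(N) and a sequence (N_k) in N strictly increasing to N₀ (with N₀ᵗʰ term N_0 = 0 or some base projection) such that AXB = Σ_{k=1}^∞ (N_k − N_{k−1}) AXB (N_k − N_{k−1}) and each term (N_k − N_{k−1}) AXB (N_k − N_{k−1}) has norm greater than 1. -/

import Mathlib

noncomputable section

universe u

variable {H : Type u} [NormedAddCommGroup H] [InnerProductSpace ℂ H] [CompleteSpace H]
  [TopologicalSpace.SeparableSpace H]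

/-- A nest: a linearly ordered set of orthogonal projections containing `0` and `1`. -/
structure Nest (H : Type u) [NormedAddCommGroup H] [InnerProductSpace ℂ H]
    [CompleteSpace H] where
  carrier : Set (H →L[ℂ] H)
  isProj : ∀ P ∈ carrier, IsSelfAdjoint P ∧ P * P = P
  zero_mem : (0 : H →L[ℂ] H) ∈ carrier
  one_mem : (1 : H →L[ℂ] H) ∈ carrier
  chain : ∀ P ∈ carrier, ∀ Q ∈ carrier, Q * P = P ∨ P * Q = Q

/-- Order on projections: `P ≤ Q` iff `ran P ⊆ ran Q`. -/
def projLE (P Q : H →L[ℂ] H) : Prop := Q * P = P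

/-- Strict order on projections. -/
def projLT (P Q : H →L[ℂ] H) : Prop := projLE P Q ∧ P ≠ Q

/-- The nest algebra: all bounded operators leaving invariant the range of every
projection in the nest, i.e. `(1 - P) X P = 0` for every `P` in the nest. -/
def nestAlgebra (𝒩 : Nest H) : Subalgebra ℂ (H →L[ℂ] H) where
  carrier := {X | ∀ P ∈ 𝒩.carrier, (1 - P) * X * P = 0}
  mul_mem' := by
    intro X Y hX hY P hP
    have hX' := hX P hP
    have hY' := hY P hP
    have hYP : Y * P = P * (Y * P) := by
      have h : (1 - P) * Y * P + P * Y * P = Y * P := by noncomm_ring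
      rw [hY', zero_add] at h
      rw [← mul_assoc]; exact h.symm
    calc (1 - P) * (X * Y) * P = (1 - P) * X * (Y * P) := by noncomm_ring
      _ = (1 - P) * X * (P * (Y * P)) := by rw [← hYP]
      _ = ((1 - P) * X * P) * (Y * P) := by noncomm_ring
      _ = 0 := by rw [hX', zero_mul]
  one_mem' := by
    intro P hP
    have h := (𝒩.isProj P hP).2
    calc (1 - P) * 1 * P = P - P * P := by noncomm_ring
      _ = 0 := by rw [h, sub_self]
  add_mem' := by
    intro X Y hX hY P hP
    have hX' := hX P hP
    have hY' := hY P hP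
    calc (1 - P) * (X + Y) * P = (1 - P) * X * P + (1 - P) * Y * P := by noncomm_ring
      _ = 0 := by rw [hX', hY', add_zero]
  zero_mem' := by intro P hP; simp
  algebraMap_mem' := by
    intro c P hP
    have h := (𝒩.isProj P hP).2
    have h1 : (1 - P) * 1 * P = 0 := by
      calc (1 - P) * 1 * P = P - P * P := by noncomm_ring
        _ = 0 := by rw [h, sub_self]
    calc (1 - P) * (algebraMap ℂ (H →L[ℂ] H) c) * P
        = (1 - P) * (c • (1 : H →L[ℂ] H)) * P := by rw [Algebra.algebraMap_eq_smul_one]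
      _ = c • ((1 - P) * 1 * P) := by rw [mul_smul_comm, smul_mul_assoc]
      _ = 0 := by rw [h1, smul_zero]

/-- The diagonal seminorm `i⁻_{N₀}(X) = inf { ‖(N₀-M)X(N₀-M)‖ : M ∈ 𝒩, M < N₀ }`. -/
def iMinus (𝒩 : Nest H) (N₀ X : H →L[ℂ] H) : ℝ :=
  sInf {r | ∃ M ∈ 𝒩.carrier, projLT M N₀ ∧ r = ‖(N₀ - M) * X * (N₀ - M)‖}

/-- The diagonal seminorm `i⁺_{N₀}(X) = inf { ‖(M-N₀)X(M-N₀)‖ : M ∈ 𝒩, M > N₀ }`. -/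
def iPlus (𝒩 : Nest H) (N₀ X : H →L[ℂ] H) : ℝ :=
  sInf {r | ∃ M ∈ 𝒩.carrier, projLT N₀ M ∧ r = ‖(M - N₀) * X * (M - N₀)‖}


local notation "⟪" x ", " y "⟫" => @inner ℂ _ _ x y

set_option linter.unusedSectionVars false
set_option maxHeartbeats 1000000

section helpers

/-- symmetric operators -/
lemma sa_inner {T : H →L[ℂ] H} (hsa : IsSelfAdjoint T) (a b : H) :
    ⟪T a, b⟫ = ⟪a, T b⟫ := by
  have := ContinuousLinearMap.adjoint_inner_left T b a
  rwa [ContinuousLinearMap.isSelfAdjoint_iff'.mp hsa] at this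

/-- symmetric idempotent is contractive -/
lemma symm_idem_norm_apply_le {T : H →L[ℂ] H}
    (hsym : ∀ a b : H, ⟪T a, b⟫ = ⟪a, T b⟫) (hid : ∀ h : H, T (T h) = T h)
    (h : H) : ‖T h‖ ≤ ‖h‖ := by
  have hadj : ⟪T h, T h⟫ = ⟪h, T h⟫ := by rw [hsym h (T h), hid h]
  have hnorm : (‖T h‖ : ℝ)^2 = ‖⟪h, T h⟫‖ := by
    rw [← hadj, inner_self_eq_norm_sq_to_K]
    simp
  have hb : ‖⟪h, T h⟫‖ ≤ ‖h‖ * ‖T h‖ := norm_inner_le_norm _ _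
  nlinarith [norm_nonneg (T h), norm_nonneg h]

lemma sa_idem_norm_le_one {T : H →L[ℂ] H} (hsa : IsSelfAdjoint T) (hid : T * T = T) :
    ‖T‖ ≤ 1 := by
  refine ContinuousLinearMap.opNorm_le_bound T zero_le_one fun h => ?_
  rw [one_mul]
  refine symm_idem_norm_apply_le (sa_inner hsa) (fun h => ?_) h
  conv_rhs => rw [← hid]
  rfl

section synth
variable {v w x : ℕ → H}

lemma synth_summable (hv : Orthonormal ℂ v) {f : ℕ → ℂ}
    (hf : Summable fun k => ‖f k‖^2) : Summable fun k => f k • v k := by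
  have := (hv.orthogonalFamily.summable_iff_norm_sq_summable f).mpr (by simpa using hf)
  simpa [LinearIsometry.toSpanSingleton_apply] using this

lemma synth_norm_sq_le (hv : Orthonormal ℂ v) {f : ℕ → ℂ}
    (hf : Summable fun k => ‖f k‖^2) :
    ‖∑' k, f k • v k‖^2 ≤ ∑' k, ‖f k‖^2 := by
  have hS := (synth_summable hv hf).hasSum
  have hnorm : Filter.Tendsto (fun s : Finset ℕ => ‖∑ k ∈ s, f k • v k‖^2)
      Filter.atTop (nhds (‖∑' k, f k • v k‖^2)) := by
    exact ((continuous_norm.pow 2).continuousAt).tendsto.comp hS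
  refine le_of_tendsto hnorm (Filter.Eventually.of_forall fun s => ?_)
  have h1 : ‖∑ k ∈ s, f k • v k‖^2 = ∑ k ∈ s, ‖f k‖^2 := by
    have := hv.orthogonalFamily.norm_sum f s
    simpa [LinearIsometry.toSpanSingleton_apply] using this
  rw [h1]
  exact Summable.sum_le_tsum s (fun k _ => by positivity) hf

lemma exists_synthOp (hw : Orthonormal ℂ w) (hx : Orthonormal ℂ x) :
    ∃ T : H →L[ℂ] H, (∀ h : H, HasSum (fun k => ⟪w k, h⟫ • x k) (T h)) ∧ ‖T‖ ≤ 1 := by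
  have hsum : ∀ h : H, Summable fun k => ⟪w k, h⟫ • x k := fun h =>
    synth_summable hx (hw.inner_products_summable (x := h))
  have hbound : ∀ h : H, ‖∑' k, ⟪w k, h⟫ • x k‖ ≤ ‖h‖ := by
    intro h
    have h1 := synth_norm_sq_le hx (hw.inner_products_summable (x := h))
    have h2 := hw.tsum_inner_products_le (x := h)
    nlinarith [norm_nonneg (∑' k, ⟪w k, h⟫ • x k), norm_nonneg h]
  let g : H →ₗ[ℂ] H :=
    { toFun := fun h => ∑' k, ⟪w k, h⟫ • x k
      map_add' := by
        intro a b
        have : (fun k => ⟪w k, a + b⟫ • x k) = fun k => ⟪w k, a⟫ • x k + ⟪w k, b⟫ • x k := by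
          funext k; rw [inner_add_right, add_smul]
        show ∑' k, ⟪w k, a + b⟫ • x k = _
        rw [this, Summable.tsum_add (hsum a) (hsum b)]
      map_smul' := by
        intro c a
        have : (fun k => ⟪w k, c • a⟫ • x k) = fun k => c • (⟪w k, a⟫ • x k) := by
          funext k; rw [inner_smul_right, smul_smul]
        show ∑' k, ⟪w k, c • a⟫ • x k = _
        rw [this, Summable.tsum_const_smul c (hsum a)]
        rfl }
  refine ⟨g.mkContinuous 1 (fun h => by rw [one_mul]; exact hbound h), fun h => ?_, ?_⟩
  · exact (hsum h).hasSum
  · exact g.mkContinuous_norm_le (by norm_num) _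
end synth
end helpers

/-- Bundled working context: a nest with a strictly increasing sequence converging to `N₀`,
and an operator of the nest algebra all of whose "tail compressions" have norm at least 2. -/
structure Setup (𝒩 : Nest H) where
  N₀ : H →L[ℂ] H
  M : ℕ → H →L[ℂ] H
  X : H →L[ℂ] H
  hN₀ : N₀ ∈ 𝒩.carrier
  hMmem : ∀ n, M n ∈ 𝒩.carrier
  hMmono : ∀ n, projLT (M n) (M (n + 1))
  hMlt : ∀ n, projLT (M n) N₀
  hMconv : ∀ h : H, Filter.Tendsto (fun n => M n h) Filter.atTop (nhds (N₀ h))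
  hX : X ∈ nestAlgebra 𝒩
  htail : ∀ n, 2 ≤ ‖(N₀ - M n) * X * (N₀ - M n)‖

namespace Setup

variable {𝒩 : Nest H} (S : Setup 𝒩)

lemma Msa (n : ℕ) : IsSelfAdjoint (S.M n) := (𝒩.isProj _ (S.hMmem n)).1
lemma Midem (n : ℕ) : S.M n * S.M n = S.M n := (𝒩.isProj _ (S.hMmem n)).2
lemma N₀sa : IsSelfAdjoint S.N₀ := (𝒩.isProj _ S.hN₀).1
lemma N₀idem : S.N₀ * S.N₀ = S.N₀ := (𝒩.isProj _ S.hN₀).2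

lemma MM {i j : ℕ} (h : i ≤ j) : S.M j * S.M i = S.M i := by
  induction j with
  | zero =>
    have hi : i = 0 := Nat.le_zero.mp h
    subst hi; exact S.Midem 0
  | succ j ih =>
    rcases Nat.lt_or_ge i (j+1) with hlt | hge
    · have hij : i ≤ j := Nat.lt_succ_iff.mp hlt
      have h1 : S.M (j+1) * S.M j = S.M j := (S.hMmono j).1
      calc S.M (j+1) * S.M i = S.M (j+1) * (S.M j * S.M i) := by rw [ih hij]
        _ = (S.M (j+1) * S.M j) * S.M i := by rw [mul_assoc]
        _ = S.M i := by rw [h1, ih hij]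
    · have : i = j + 1 := le_antisymm h hge
      subst this; exact S.Midem _

lemma MM' {i j : ℕ} (h : i ≤ j) : S.M i * S.M j = S.M i := by
  have := congrArg star (S.MM h)
  rwa [star_mul, (S.Msa i).star_eq, (S.Msa j).star_eq] at this

lemma N₀M (n : ℕ) : S.N₀ * S.M n = S.M n := (S.hMlt n).1

lemma MN₀ (n : ℕ) : S.M n * S.N₀ = S.M n := by
  have := congrArg star (S.N₀M n)
  rwa [star_mul, (S.Msa n).star_eq, S.N₀sa.star_eq] at this

/-- antisymmetry -/
lemma projLE_antisymm {P Q : H →L[ℂ] H} (hP : IsSelfAdjoint P) (hQ : IsSelfAdjoint Q)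
    (h1 : Q * P = P) (h2 : P * Q = Q) : P = Q := by
  have := congrArg star h1
  rw [star_mul, hP.star_eq, hQ.star_eq] at this
  rw [← this, h2]

lemma Mne {i j : ℕ} (h : i < j) : S.M i ≠ S.M j := by
  intro he
  have h1 : S.M (i+1) * S.M i = S.M i := (S.hMmono i).1
  have h2 : S.M i * S.M (i+1) = S.M (i+1) := by
    rw [he]; exact S.MM h
  exact (S.hMmono i).2 (projLE_antisymm (S.Msa i) (S.Msa (i+1)) h1 h2)

lemma projLT_M {i j : ℕ} (h : i < j) : projLT (S.M i) (S.M j) :=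
  ⟨S.MM h.le, S.Mne h⟩

/-! Window operators `E a b = M b - M a` and tails `Q n = N₀ - M n`. -/

def E (a b : ℕ) : H →L[ℂ] H := S.M b - S.M a
def Q (n : ℕ) : H →L[ℂ] H := S.N₀ - S.M n

lemma Esa (a b : ℕ) : IsSelfAdjoint (S.E a b) := (S.Msa b).sub (S.Msa a)
lemma Qsa (n : ℕ) : IsSelfAdjoint (S.Q n) := S.N₀sa.sub (S.Msa n)

lemma E_idem {a b : ℕ} (h : a ≤ b) : S.E a b * S.E a b = S.E a b := by
  simp only [E, mul_sub, sub_mul, S.Midem, S.MM h, S.MM' h]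
  abel

lemma Q_idem (n : ℕ) : S.Q n * S.Q n = S.Q n := by
  simp only [Q, mul_sub, sub_mul, S.Midem, S.N₀idem, S.N₀M, S.MN₀]
  abel

lemma E_norm_le_one {a b : ℕ} (h : a ≤ b) : ‖S.E a b‖ ≤ 1 :=
  sa_idem_norm_le_one (S.Esa a b) (S.E_idem h)

lemma Q_norm_le_one (n : ℕ) : ‖S.Q n‖ ≤ 1 :=
  sa_idem_norm_le_one (S.Qsa n) (S.Q_idem n)

lemma EE_zero {a b c d : ℕ} (h1 : a ≤ b) (h2 : b ≤ c) (h3 : c ≤ d) :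
    S.E a b * S.E c d = 0 ∧ S.E c d * S.E a b = 0 := by
  constructor <;>
  · simp only [E, mul_sub, sub_mul, S.MM' (h1.trans (h2.trans h3)), S.MM' (h1.trans h2),
      S.MM (h1.trans (h2.trans h3)), S.MM (h1.trans h2), S.MM h3, S.MM' h3,
      S.MM (h2.trans h3), S.MM' (h2.trans h3),
      S.MM h1, S.MM' h1, S.MM h2, S.MM' h2]
    try abel

lemma E_absorb_left {a b c : ℕ} (hab : a ≤ b) (hbc : b ≤ c) :
    S.E a c * S.E a b = S.E a b := by
  simp only [E, mul_sub, sub_mul, S.MM hab, S.MM' hab, S.MM hbc, S.MM (hab.trans hbc),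
    S.MM' (hab.trans hbc), S.Midem]
  abel

lemma E_absorb_right {a b c : ℕ} (hab : a ≤ b) (hbc : b ≤ c) :
    S.E a c * S.E b c = S.E b c := by
  simp only [E, mul_sub, sub_mul, S.MM hbc, S.MM' hbc, S.MM hab, S.MM (hab.trans hbc),
    S.MM' (hab.trans hbc), S.MM' hab, S.Midem]
  abel

lemma QQ {p q : ℕ} (h : p ≤ q) : S.Q q * S.Q p = S.Q q ∧ S.Q p * S.Q q = S.Q q := by
  constructor <;>
  · simp only [Q, mul_sub, sub_mul, S.N₀idem, S.N₀M, S.MN₀, S.MM h, S.MM' h]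
    try abel

lemma QE {p q n : ℕ} (hpq : p ≤ q) (hqn : q ≤ n) :
    S.Q n * S.E p q = 0 ∧ S.E p q * S.Q n = 0 := by
  constructor <;>
  · simp only [Q, E, mul_sub, sub_mul, S.N₀M, S.MN₀, S.MM hpq, S.MM' hpq,
      S.MM (hpq.trans hqn), S.MM' (hpq.trans hqn), S.MM hqn, S.MM' hqn]
    try abel

lemma QpE {p q : ℕ} (h : p ≤ q) : S.Q p * S.E p q = S.E p q ∧ S.E p q * S.Q p = S.E p q := by
  constructor <;>
  · simp only [Q, E, mul_sub, sub_mul, S.N₀M, S.MN₀, S.MM h, S.MM' h, S.Midem]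
    try abel

lemma ME_abs {p q : ℕ} (h : p ≤ q) : S.M q * S.E p q = S.E p q ∧ S.E p q * S.M q = S.E p q := by
  constructor <;>
  · simp only [E, mul_sub, sub_mul, S.MM h, S.MM' h, S.Midem]
    try abel

lemma ME_zero {r p q : ℕ} (hrp : r ≤ p) (hpq : p ≤ q) :
    S.M r * S.E p q = 0 ∧ S.E p q * S.M r = 0 := by
  constructor <;>
  · simp only [E, mul_sub, sub_mul, S.MM (hrp.trans hpq), S.MM' (hrp.trans hpq),
      S.MM hrp, S.MM' hrp]
    try abel

/-- invariance of ranges of nest projections under `X`. -/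
lemma Xinv (P : H →L[ℂ] H) (hP : P ∈ 𝒩.carrier) : P * (S.X * P) = S.X * P := by
  have h0 : (1 - P) * S.X * P = 0 := S.hX P hP
  have h : S.X * P - P * (S.X * P) = 0 := by
    calc S.X * P - P * (S.X * P) = (1 - P) * S.X * P := by noncomm_ring
      _ = 0 := h0
  exact (sub_eq_zero.mp h).symm

/-- strong convergence of tails to `0`. -/
lemma Qtend (z : H) : Filter.Tendsto (fun n => ‖S.Q n z‖) Filter.atTop (nhds 0) := by
  have h1 : Filter.Tendsto (fun n => S.N₀ z - S.M n z) Filter.atTop (nhds (S.N₀ z - S.N₀ z)) :=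
    Filter.Tendsto.sub tendsto_const_nhds (S.hMconv z)
  rw [sub_self] at h1
  have h2 : (fun n => S.Q n z) = fun n => S.N₀ z - S.M n z := by
    funext n; simp [Q, ContinuousLinearMap.sub_apply]
  rw [show (0:ℝ) = ‖(0:H)‖ by simp]
  exact (h2 ▸ h1).norm

/-- a unit vector in the (nonzero) window between `M n` and `M (n+1)`. -/
lemma exists_unit_window (n : ℕ) :
    ∃ x : H, S.E n (n+1) x = x ∧ ‖x‖ = 1 := by
  have hne : S.E n (n+1) ≠ 0 := by
    intro h0
    exact (S.hMmono n).2 (by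
      have : S.M (n+1) - S.M n = 0 := h0
      have := sub_eq_zero.mp this
      exact this.symm)
  obtain ⟨h, hh⟩ : ∃ h : H, S.E n (n+1) h ≠ 0 := by
    by_contra hc
    push_neg at hc
    exact hne (ContinuousLinearMap.ext fun h => by rw [hc h]; rfl)
  refine ⟨(‖S.E n (n+1) h‖ : ℂ)⁻¹ • S.E n (n+1) h, ?_, ?_⟩
  · rw [ContinuousLinearMap.map_smul]
    congr 1
    have := congrArg (fun T : H →L[ℂ] H => T h) (S.E_idem (Nat.le_succ n))
    simpa [ContinuousLinearMap.mul_apply] using this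
  · have hne' : ‖S.E n (n+1) h‖ ≠ 0 := norm_ne_zero_iff.mpr hh
    rw [norm_smul, norm_inv, Complex.norm_real, norm_norm]
    exact inv_mul_cancel₀ hne'

end Setup

namespace Setup
variable {𝒩 : Nest H} (S : Setup 𝒩)

lemma mul_apply_eq {T U V : H →L[ℂ] H} (h : T * U = V) (z : H) : T (U z) = V z := by
  have := congrArg (fun W : H →L[ℂ] H => W z) h
  simpa [ContinuousLinearMap.mul_apply] using this

lemma mul_apply_zero {T U : H →L[ℂ] H} (h : T * U = 0) (z : H) : T (U z) = 0 := by
  have := mul_apply_eq h z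
  simpa using this

lemma mul_apply_eq' {T U V W : H →L[ℂ] H} (h : T * U = V * W) (z : H) : T (U z) = V (W z) := by
  have := congrArg (fun A : H →L[ℂ] H => A z) h
  simpa [ContinuousLinearMap.mul_apply] using this

/-- The key interpolation step: inside some window `(M p, M q)` one can find a unit
vector `v` orthogonal to the finitely many constraints `u i`, together with a unit
vector `wv` in the same window, with `⟪wv, X v⟫` real and greater than `1`. -/
lemma step (p : ℕ) {r : ℕ} (u : Fin r → H) :
    ∃ q, p < q ∧ ∃ v wv : H, S.E p q v = v ∧ ‖v‖ = 1 ∧ S.E p q wv = wv ∧ ‖wv‖ = 1 ∧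
      (∀ i, ⟪u i, v⟫ = 0) ∧ ∃ c : ℝ, 1 < c ∧ ⟪wv, S.X v⟫ = (c : ℂ) := by
  classical
  set Qp := S.Q p with hQpdef
  -- the finite-dimensional constraint space
  set V : Submodule ℂ H := Submodule.span ℂ (Set.range fun i => Qp (u i)) with hVdef
  haveI : FiniteDimensional ℂ V := FiniteDimensional.span_of_finite ℂ (Set.finite_range _)
  set d := Module.finrank ℂ V with hd
  set ob := stdOrthonormalBasis ℂ V with hob
  set e : Fin d → H := fun i => (ob i : H) with he
  have hQidem : ∀ z : H, Qp (Qp z) = Qp z := mul_apply_eq (S.Q_idem p)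
  have hQsym : ∀ a b : H, ⟪Qp a, b⟫ = ⟪a, Qp b⟫ := sa_inner (S.Qsa p)
  have hQfix : ∀ z ∈ V, Qp z = z := by
    intro z hz
    have hker : V ≤ LinearMap.ker ((Qp - 1 : H →L[ℂ] H) : H →ₗ[ℂ] H) := by
      rw [hVdef, Submodule.span_le]
      rintro _ ⟨i, rfl⟩
      simp only [SetLike.mem_coe, LinearMap.mem_ker, ContinuousLinearMap.coe_coe,
        ContinuousLinearMap.sub_apply, ContinuousLinearMap.one_apply]
      rw [hQidem, sub_self]
    have := hker hz
    simp only [LinearMap.mem_ker, ContinuousLinearMap.coe_coe,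
      ContinuousLinearMap.sub_apply, ContinuousLinearMap.one_apply] at this
    exact sub_eq_zero.mp this
  have he_unit : ∀ i, ‖e i‖ = 1 := by
    intro i
    have := ob.orthonormal.1 i
    exact this
  have he_inner : ∀ i j, ⟪e i, e j⟫ = if i = j then 1 else 0 := by
    intro i j
    by_cases hij : i = j
    · subst hij
      simp only [if_pos rfl]
      rw [inner_self_eq_norm_sq_to_K (𝕜 := ℂ) (e i), he_unit i]
      norm_num
    · simp only [if_neg hij]
      have := ob.orthonormal.2 hij
      simpa [he, Submodule.coe_inner] using this
  have heV : ∀ i, e i ∈ V := fun i => (ob i).2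
  have heQ : ∀ i, Qp (e i) = e i := fun i => hQfix _ (heV i)
  -- the projection onto the constraint space
  set P : H →L[ℂ] H := ∑ i : Fin d, (innerSL ℂ (e i)).smulRight (e i) with hPdef
  have hP_apply : ∀ h : H, P h = ∑ i, ⟪e i, h⟫ • e i := by
    intro h
    simp [hPdef, ContinuousLinearMap.sum_apply]
  have hinnerP : ∀ (i : Fin d) (h : H), ⟪e i, P h⟫ = ⟪e i, h⟫ := by
    intro i h
    rw [hP_apply, inner_sum]
    simp_rw [inner_smul_right, he_inner]
    rw [Finset.sum_eq_single i]
    · simp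
    · intro j _ hji
      simp [if_neg (Ne.symm hji)]
    · intro hi; exact absurd (Finset.mem_univ i) hi
  have hPmemV : ∀ h : H, P h ∈ V := by
    intro h
    rw [hP_apply]
    exact Submodule.sum_mem _ fun i _ => Submodule.smul_mem _ _ (heV i)
  have hPP : ∀ h : H, P (P h) = P h := by
    intro h
    have h2 : (fun i => ⟪e i, P h⟫ • e i) = fun i => ⟪e i, h⟫ • e i :=
      funext fun i => by rw [hinnerP]
    rw [hP_apply (P h), h2, ← hP_apply]
  have hPsym : ∀ a b : H, ⟪P a, b⟫ = ⟪a, P b⟫ := by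
    intro a b
    rw [hP_apply a, hP_apply b, sum_inner, inner_sum]
    refine Finset.sum_congr rfl fun i _ => ?_
    rw [inner_smul_left, inner_smul_right, inner_conj_symm a (e i)]
    ring
  have hQP : ∀ h : H, Qp (P h) = P h := fun h => hQfix _ (hPmemV h)
  have hPQ : ∀ h : H, P (Qp h) = P h := by
    intro h
    have h2 : (fun i => ⟪e i, Qp h⟫ • e i) = fun i => ⟪e i, h⟫ • e i :=
      funext fun i => by rw [← hQsym, heQ]
    rw [hP_apply (Qp h), h2, ← hP_apply]
  have hPnorm : ∀ h : H, ‖P h‖ ≤ ‖h‖ := symm_idem_norm_apply_le hPsym hPP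
  have h1mP : ∀ h : H, ‖h - P h‖ ≤ ‖h‖ := by
    have hsym : ∀ a b : H, ⟪a - P a, b⟫ = ⟪a, b - P b⟫ := by
      intro a b
      rw [inner_sub_left, inner_sub_right, hPsym]
    have hid : ∀ h : H, (h - P h) - P (h - P h) = h - P h := by
      intro h
      rw [map_sub, hPP]
      abel
    intro h
    exact symm_idem_norm_apply_le (T := 1 - P) (by simpa using hsym) (by simpa using hid) h
  have hPQm : ∀ (m : ℕ) (h : H), ‖P (S.Q m h)‖ ≤ (∑ i, ‖S.Q m (e i)‖) * ‖h‖ := by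
    intro m h
    rw [hP_apply]
    have h1 : ∀ i : Fin d, ⟪e i, S.Q m h⟫ = ⟪S.Q m (e i), h⟫ := by
      intro i; rw [sa_inner (S.Qsa m)]
    calc ‖∑ i, ⟪e i, S.Q m h⟫ • e i‖ ≤ ∑ i, ‖⟪e i, S.Q m h⟫ • e i‖ := norm_sum_le _ _
      _ ≤ ∑ i, ‖S.Q m (e i)‖ * ‖h‖ := by
          refine Finset.sum_le_sum fun i _ => ?_
          rw [norm_smul, h1, he_unit, mul_one]
          exact norm_inner_le_norm _ _
      _ = (∑ i, ‖S.Q m (e i)‖) * ‖h‖ := by rw [Finset.sum_mul]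
  -- quantities
  set s : ℕ → ℝ := fun n => ∑ i, ‖S.Q n (e i)‖ with hs_def
  have hs_nonneg : ∀ n, 0 ≤ s n := fun n => Finset.sum_nonneg fun i _ => norm_nonneg _
  have hs_tend : Filter.Tendsto s Filter.atTop (nhds 0) := by
    have : Filter.Tendsto (fun n => ∑ i : Fin d, ‖S.Q n (e i)‖) Filter.atTop
        (nhds (∑ _i : Fin d, (0:ℝ))) :=
      tendsto_finset_sum _ fun i _ => S.Qtend (e i)
    simpa using this
  -- choose m with small error on the constraint vectors
  have h1 : Filter.Tendsto (fun n => ‖S.X‖ * s n) Filter.atTop (nhds 0) := by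
    simpa using hs_tend.const_mul ‖S.X‖
  obtain ⟨m, hm1, hpm⟩ := ((h1.eventually_lt_const (show (0:ℝ) < 1/8 by norm_num)).and
    (Filter.eventually_ge_atTop p)).exists
  -- the operator R = Qp X (Qp - P) has norm at least 15/8
  set R : H →L[ℂ] H := Qp * S.X * (Qp - P) with hRdef
  have hQmQp : S.Q m * Qp = S.Q m := (S.QQ hpm).1
  have hQpQm : Qp * S.Q m = S.Q m := (S.QQ hpm).2
  have hkey : S.Q m * R * S.Q m = S.Q m * S.X * S.Q m - S.Q m * S.X * (P * S.Q m) := by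
    have h2 : S.Q m * R * S.Q m
        = (S.Q m * Qp) * S.X * (Qp * S.Q m) - (S.Q m * Qp) * S.X * (P * S.Q m) := by
      rw [hRdef]; noncomm_ring
    rw [h2, hQmQp, hQpQm]
  have hsmall : ‖S.Q m * S.X * (P * S.Q m)‖ ≤ ‖S.X‖ * s m := by
    refine ContinuousLinearMap.opNorm_le_bound _ (by positivity) fun h => ?_
    have h3 : (S.Q m * S.X * (P * S.Q m)) h = S.Q m (S.X (P (S.Q m h))) := by
      simp [ContinuousLinearMap.mul_apply]
    rw [h3]
    calc ‖S.Q m (S.X (P (S.Q m h)))‖ ≤ ‖S.X (P (S.Q m h))‖ :=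
          symm_idem_norm_apply_le (sa_inner (S.Qsa m)) (mul_apply_eq (S.Q_idem m)) _
      _ ≤ ‖S.X‖ * ‖P (S.Q m h)‖ := ContinuousLinearMap.le_opNorm _ _
      _ ≤ ‖S.X‖ * (s m * ‖h‖) := mul_le_mul_of_nonneg_left (hPQm m h) (norm_nonneg _)
      _ = ‖S.X‖ * s m * ‖h‖ := by ring
  have hRlb : (15/8 : ℝ) ≤ ‖R‖ := by
    have h4 : ‖S.Q m * R * S.Q m‖ ≤ ‖R‖ := by
      have h4a : ‖S.Q m * R * S.Q m‖ ≤ ‖S.Q m * R‖ * ‖S.Q m‖ := norm_mul_le _ _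
      have h4b : ‖S.Q m * R‖ ≤ ‖S.Q m‖ * ‖R‖ := norm_mul_le _ _
      have h4c := S.Q_norm_le_one m
      nlinarith [norm_nonneg (S.Q m * R), norm_nonneg R, norm_nonneg (S.Q m)]
    have h5 : (2:ℝ) ≤ ‖S.Q m * S.X * S.Q m‖ := S.htail m
    have h6 : ‖S.Q m * S.X * S.Q m‖ - ‖S.Q m * S.X * (P * S.Q m)‖ ≤ ‖S.Q m * R * S.Q m‖ := by
      rw [hkey]; exact norm_sub_norm_le _ _
    linarith
  obtain ⟨h₀, hh₀, hRh₀⟩ := R.exists_lt_apply_of_lt_opNorm (show (13/8:ℝ) < ‖R‖ by linarith)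
  set y₀ : H := Qp h₀ - P h₀ with hy₀def
  have hy₀Q : Qp y₀ = y₀ := by rw [hy₀def, map_sub, hQidem, hQP]
  have hy₀P : P y₀ = 0 := by rw [hy₀def, map_sub, hPQ, hPP, sub_self]
  have hy₀n : ‖y₀‖ ≤ 1 := by
    have h7 : y₀ = Qp h₀ - P (Qp h₀) := by rw [hy₀def, hPQ]
    rw [h7]
    calc ‖Qp h₀ - P (Qp h₀)‖ ≤ ‖Qp h₀‖ := h1mP _
      _ ≤ ‖h₀‖ := symm_idem_norm_apply_le hQsym hQidem h₀
      _ ≤ 1 := hh₀.le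
  have hRy : (13/8:ℝ) < ‖Qp (S.X y₀)‖ := by
    have h8 : R h₀ = Qp (S.X y₀) := by
      rw [hRdef, hy₀def]
      simp [ContinuousLinearMap.mul_apply, ContinuousLinearMap.sub_apply]
    rwa [h8] at hRh₀
  -- choose q with all the smallness conditions
  set β : ℝ := 1/(100 * (‖S.X‖ + 1)) with hβdef
  have hβpos : 0 < β := by rw [hβdef]; positivity
  have hβX : β * ‖S.X‖ ≤ 1/100 := by
    rw [hβdef, div_mul_eq_mul_div, one_mul, div_le_div_iff₀ (by positivity) (by norm_num)]
    nlinarith [norm_nonneg S.X]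
  have hβ1 : β ≤ 1/100 := by
    rw [hβdef, div_le_div_iff₀ (by positivity) (by norm_num)]
    nlinarith [norm_nonneg S.X]
  obtain ⟨q, ⟨hsq, hQqy₀⟩, hQqXy₀, hpq⟩ :=
    (((hs_tend.eventually_lt_const hβpos).and
      ((S.Qtend y₀).eventually_lt_const hβpos)).and
     (((S.Qtend (S.X y₀)).eventually_lt_const hβpos).and
      (Filter.eventually_gt_atTop p))).exists
  refine ⟨q, hpq, ?_⟩
  set D : H →L[ℂ] H := S.E p q with hDdef
  have hpqle : p ≤ q := hpq.le
  have hDidem : ∀ z, D (D z) = D z := mul_apply_eq (S.E_idem hpqle)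
  have hDsym : ∀ a b : H, ⟪D a, b⟫ = ⟪a, D b⟫ := sa_inner (S.Esa p q)
  have hDcontr : ∀ z : H, ‖D z‖ ≤ ‖z‖ := symm_idem_norm_apply_le hDsym hDidem
  have hDQ : D = Qp - S.Q q := by
    rw [hDdef, hQpdef]
    show S.M q - S.M p = (S.N₀ - S.M p) - (S.N₀ - S.M q)
    abel
  have hQpD : ∀ z, Qp (D z) = D z := mul_apply_eq (S.QpE hpqle).1
  set t : H →L[ℂ] H := P * S.Q q * P with htdef
  have ht_apply : ∀ h : H, t h = P (S.Q q (P h)) := by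
    intro h; simp [htdef, ContinuousLinearMap.mul_apply]
  have htn : ‖t‖ ≤ s q := by
    refine ContinuousLinearMap.opNorm_le_bound _ (hs_nonneg q) fun h => ?_
    rw [ht_apply]
    calc ‖P (S.Q q (P h))‖ ≤ s q * ‖P h‖ := hPQm q (P h)
      _ ≤ s q * ‖h‖ := mul_le_mul_of_nonneg_left (hPnorm h) (hs_nonneg q)
  have htlt : ‖t‖ < 1 := lt_of_le_of_lt htn (lt_of_lt_of_le hsq (by linarith))
  have ht_half : ‖t‖ ≤ 1/2 := by linarith
  set 𝒰 : (H →L[ℂ] H)ˣ := Units.oneSub t htlt with h𝒰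
  set Ginv : H →L[ℂ] H := ↑𝒰⁻¹ with hGdef
  have hval : (𝒰 : H →L[ℂ] H) = 1 - t := rfl
  have hGinv1 : (1 - t) * Ginv = 1 := by rw [← hval, hGdef]; exact 𝒰.mul_inv
  have hPidem_op : P * P = P := ContinuousLinearMap.ext hPP
  have hPQp_op : P * Qp = P := ContinuousLinearMap.ext hPQ
  have hPt : P * t = t := by
    have h9 : P * (P * S.Q q * P) = (P * P) * S.Q q * P := by noncomm_ring
    rw [htdef, h9, hPidem_op]
  have htP : t * P = t := by
    have h9 : (P * S.Q q * P) * P = P * S.Q q * (P * P) := by noncomm_ring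
    rw [htdef, h9, hPidem_op]
  have hcommP𝒰 : Commute P ((𝒰 : (H →L[ℂ] H)ˣ) : H →L[ℂ] H) := by
    show P * (𝒰 : H →L[ℂ] H) = (𝒰 : H →L[ℂ] H) * P
    rw [hval, mul_sub, sub_mul, mul_one, one_mul, hPt, htP]
  have hcommGP : P * Ginv = Ginv * P := by
    have := hcommP𝒰.units_inv_right
    exact this
  have hGn : ‖Ginv‖ ≤ 2 := by
    have h10 : Ginv - t * Ginv = 1 := by
      have := hGinv1; rwa [sub_mul, one_mul] at this
    have h7 : Ginv = 1 + t * Ginv := by rw [← h10]; abel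
    have h8 : ‖Ginv‖ ≤ 1 + ‖t‖ * ‖Ginv‖ := by
      calc ‖Ginv‖ = ‖1 + t * Ginv‖ := by rw [← h7]
        _ ≤ ‖(1:H →L[ℂ] H)‖ + ‖t * Ginv‖ := norm_add_le _ _
        _ ≤ 1 + ‖t‖ * ‖Ginv‖ := by
            refine add_le_add ?_ (norm_mul_le _ _)
            rw [ContinuousLinearMap.one_def]
            exact ContinuousLinearMap.norm_id_le
    nlinarith [norm_nonneg Ginv, norm_nonneg t]
  set c₀ : H := Ginv (P (D y₀)) with hc₀def
  have hPc₀ : P c₀ = c₀ := by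
    rw [hc₀def]
    rw [mul_apply_eq' hcommGP (P (D y₀)), hPP]
  have hGc₀ : c₀ - t c₀ = P (D y₀) := by
    have h10 := mul_apply_eq hGinv1 (P (D y₀))
    simpa [ContinuousLinearMap.sub_apply, ContinuousLinearMap.one_apply, hc₀def] using h10
  set y₁ : H := D y₀ - D c₀ with hy₁def
  have hDy₁ : D y₁ = y₁ := by rw [hy₁def, map_sub, hDidem, hDidem]
  have hPDP : P * D * P = P - t := by
    rw [hDQ]
    have h9 : P * (Qp - S.Q q) * P = (P * Qp) * P - P * S.Q q * P := by noncomm_ring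
    rw [h9, hPQp_op, hPidem_op, htdef]
  have hPy₁ : P y₁ = 0 := by
    rw [hy₁def, map_sub]
    have h11 : P (D c₀) = P (D (P c₀)) := by rw [hPc₀]
    have h12 : P (D (P c₀)) = (P * D * P) c₀ := by simp [ContinuousLinearMap.mul_apply]
    rw [h11, h12, hPDP, ContinuousLinearMap.sub_apply, hPc₀, hGc₀, sub_self]
  have hDy₀' : D y₀ = y₀ - S.Q q y₀ := by
    rw [hDQ, ContinuousLinearMap.sub_apply, hy₀Q]
  have hc₀n : ‖c₀‖ ≤ 2 * β := by
    have h13 : ‖P (D y₀)‖ ≤ β := by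
      rw [hDy₀', map_sub, hy₀P, zero_sub, norm_neg]
      exact le_trans (hPnorm _) hQqy₀.le
    calc ‖c₀‖ ≤ ‖Ginv‖ * ‖P (D y₀)‖ := ContinuousLinearMap.le_opNorm _ _
      _ ≤ 2 * β := mul_le_mul hGn h13 (norm_nonneg _) (by norm_num)
  have hy₁n : ‖y₁‖ ≤ 1 + 2*β := by
    rw [hy₁def]
    calc ‖D y₀ - D c₀‖ ≤ ‖D y₀‖ + ‖D c₀‖ := norm_sub_le _ _
      _ ≤ 1 + 2*β := add_le_add (le_trans (hDcontr _) hy₀n) (le_trans (hDcontr _) hc₀n)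
  have hDXy₁ : (3/2:ℝ) ≤ ‖D (S.X y₁)‖ := by
    have hXc : ‖D (S.X (D c₀))‖ ≤ ‖S.X‖ * (2*β) := by
      calc ‖D (S.X (D c₀))‖ ≤ ‖S.X (D c₀)‖ := hDcontr _
        _ ≤ ‖S.X‖ * ‖D c₀‖ := ContinuousLinearMap.le_opNorm _ _
        _ ≤ ‖S.X‖ * (2*β) :=
            mul_le_mul_of_nonneg_left (le_trans (hDcontr _) hc₀n) (norm_nonneg _)
    have hXq : ‖D (S.X (S.Q q y₀))‖ ≤ ‖S.X‖ * β := by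
      calc ‖D (S.X (S.Q q y₀))‖ ≤ ‖S.X (S.Q q y₀)‖ := hDcontr _
        _ ≤ ‖S.X‖ * ‖S.Q q y₀‖ := ContinuousLinearMap.le_opNorm _ _
        _ ≤ ‖S.X‖ * β := mul_le_mul_of_nonneg_left hQqy₀.le (norm_nonneg _)
    have hDXy₀ : (13/8:ℝ) - β ≤ ‖D (S.X y₀)‖ := by
      have h14 : D (S.X y₀) = Qp (S.X y₀) - S.Q q (S.X y₀) := by
        rw [hDQ, ContinuousLinearMap.sub_apply]
      rw [h14]
      have h15 := norm_sub_norm_le (Qp (S.X y₀)) (S.Q q (S.X y₀))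
      linarith
    have h16 : D (S.X y₁) = D (S.X y₀) - D (S.X (S.Q q y₀)) - D (S.X (D c₀)) := by
      have h17 : y₁ = y₀ - S.Q q y₀ - D c₀ := by rw [hy₁def, hDy₀']
      rw [h17, map_sub, map_sub, map_sub, map_sub]
    have h18 : ‖D (S.X y₀) - D (S.X (S.Q q y₀))‖ - ‖D (S.X (D c₀))‖ ≤ ‖D (S.X y₁)‖ := by
      rw [h16]; exact norm_sub_norm_le _ _
    have h19 : ‖D (S.X y₀)‖ - ‖D (S.X (S.Q q y₀))‖ ≤ ‖D (S.X y₀) - D (S.X (S.Q q y₀))‖ :=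
      norm_sub_norm_le _ _
    linarith
  have hy₁ne : ‖y₁‖ ≠ 0 := by
    intro h0
    rw [norm_eq_zero] at h0
    rw [h0] at hDXy₁
    simp at hDXy₁
    linarith
  set v : H := ((‖y₁‖:ℂ))⁻¹ • y₁ with hvdef
  have hDv : D v = v := by rw [hvdef, map_smul, hDy₁]
  have hvn : ‖v‖ = 1 := by
    rw [hvdef, norm_smul, norm_inv, Complex.norm_real, norm_norm]
    exact inv_mul_cancel₀ hy₁ne
  have hPv : P v = 0 := by rw [hvdef, map_smul, hPy₁, smul_zero]
  have hQpv : Qp v = v := by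
    rw [hvdef, map_smul]
    congr 1
    calc Qp y₁ = Qp (D y₁) := by rw [hDy₁]
      _ = D y₁ := hQpD _
      _ = y₁ := hDy₁
  have hperp : ∀ i, ⟪u i, v⟫ = 0 := by
    intro i
    have h16 : ⟪u i, v⟫ = ⟪Qp (u i), v⟫ := by
      conv_lhs => rw [← hQpv]
      rw [← hQsym]
    rw [h16]
    have hz : Qp (u i) ∈ V := by rw [hVdef]; exact Submodule.subset_span ⟨i, rfl⟩
    have hev : ∀ j, ⟪e j, v⟫ = 0 := by
      intro j
      have h20 := hinnerP j v
      rw [hPv] at h20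
      simpa using h20.symm
    obtain ⟨z, hzv⟩ : ∃ z : V, (z:H) = Qp (u i) := ⟨⟨_, hz⟩, rfl⟩
    rw [← hzv]
    have h18 : (z : H) = ∑ j, (⟪ob j, z⟫ : ℂ) • e j := by
      conv_lhs => rw [← ob.sum_repr' z]
      rw [Submodule.coe_sum]
      rfl
    rw [h18, sum_inner]
    refine Finset.sum_eq_zero fun j _ => ?_
    rw [inner_smul_left, hev j, mul_zero]
  set cv : ℝ := ‖D (S.X v)‖ with hcvdef
  have hXv : S.X v = ((‖y₁‖:ℂ))⁻¹ • S.X y₁ := by rw [hvdef, map_smul]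
  have hcv_eq : cv = ‖y₁‖⁻¹ * ‖D (S.X y₁)‖ := by
    rw [hcvdef, hXv, map_smul, norm_smul, norm_inv, Complex.norm_real, norm_norm]
  have hnvpos : 0 < ‖y₁‖ := lt_of_le_of_ne (norm_nonneg _) (Ne.symm hy₁ne)
  have hcv1 : 1 < cv := by
    rw [hcv_eq]
    calc (1:ℝ) = ‖y₁‖⁻¹ * ‖y₁‖ := (inv_mul_cancel₀ hy₁ne).symm
      _ < ‖y₁‖⁻¹ * ‖D (S.X y₁)‖ := by
          refine mul_lt_mul_of_pos_left ?_ (inv_pos.mpr hnvpos)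
          linarith
  have hcvne : cv ≠ 0 := by linarith
  set wv : H := ((cv:ℂ))⁻¹ • D (S.X v) with hwdef
  have hDwv : D wv = wv := by rw [hwdef, map_smul, hDidem]
  have hwn : ‖wv‖ = 1 := by
    rw [hwdef, norm_smul, norm_inv, Complex.norm_real, norm_norm]
    exact inv_mul_cancel₀ hcvne
  have hinner_final : ⟪wv, S.X v⟫ = (cv:ℂ) := by
    rw [hwdef, inner_smul_left]
    have hconj : (starRingEnd ℂ) (((cv:ℂ))⁻¹) = ((cv:ℂ))⁻¹ := by
      rw [map_inv₀, Complex.conj_ofReal]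
    rw [hconj]
    have h20 : ⟪D (S.X v), S.X v⟫ = ⟪D (S.X v), D (S.X v)⟫ := by
      conv_lhs => rw [← hDidem (S.X v)]
      rw [hDsym]
    rw [h20, inner_self_eq_norm_sq_to_K]
    rw [show ‖D (S.X v)‖ = cv from rfl]
    have hcvC : ((cv:ℂ)) ≠ 0 := Complex.ofReal_ne_zero.mpr hcvne
    field_simp
    exact rfl
  exact ⟨v, wv, hDv, hvn, hDwv, hwn, hperp, cv, hcv1, hinner_final⟩

end Setup

/-- data of one block of the construction. -/
structure Blk (H : Type u) [NormedAddCommGroup H] [InnerProductSpace ℂ H]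
    [CompleteSpace H] where
  q : ℕ
  x : H
  w : H
  v : H
  y : H
  c : ℝ

namespace Setup
variable {𝒩 : Nest H} (S : Setup 𝒩)

/-- specification of a good block on top of cut `n` with constraint list `ws`. -/
def Good (n : ℕ) (ws : List H) (b : Blk H) : Prop :=
  n + 1 < b.q ∧
  S.E n (n+1) b.x = b.x ∧ ‖b.x‖ = 1 ∧
  S.E (n+1) b.q b.v = b.v ∧ ‖b.v‖ = 1 ∧ S.E (n+1) b.q b.w = b.w ∧ ‖b.w‖ = 1 ∧
  (∀ z ∈ ws, ⟪z, S.X b.v⟫ = 0) ∧ 1 < b.c ∧ ⟪b.w, S.X b.v⟫ = (b.c : ℂ) ∧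
  S.E b.q (b.q+1) b.y = b.y ∧ ‖b.y‖ = 1

lemma step_full (n : ℕ) (ws : List H) : ∃ b : Blk H, S.Good n ws b := by
  obtain ⟨x, hx1, hx2⟩ := S.exists_unit_window n
  obtain ⟨q, hq, v, w, hv1, hv2, hw1, hw2, hperp, c, hc, hcin⟩ :=
    S.step (n+1) (fun i : Fin ws.length => ContinuousLinearMap.adjoint S.X (ws.get i))
  obtain ⟨y, hy1, hy2⟩ := S.exists_unit_window q
  refine ⟨⟨q, x, w, v, y, c⟩, hq, hx1, hx2, hv1, hv2, hw1, hw2, ?_, hc, hcin, hy1, hy2⟩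
  intro z hz
  obtain ⟨i, hi⟩ := List.mem_iff_get.mp hz
  have h1 := hperp i
  rw [ContinuousLinearMap.adjoint_inner_left] at h1
  rw [← hi]
  exact h1

/-- one block, chosen by choice. -/
def pick (st : ℕ × List H) : Blk H := Classical.choose (S.step_full st.1 st.2)

lemma pick_spec (st : ℕ × List H) : S.Good st.1 st.2 (S.pick st) :=
  Classical.choose_spec (S.step_full st.1 st.2)

/-- the state sequence: current base cut and list of accumulated `w` vectors. -/
def st : ℕ → ℕ × List H
  | 0 => (0, [])
  | k+1 => ((S.pick (st k)).q + 1, (st k).2 ++ [(S.pick (st k)).w])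

def blk (k : ℕ) : Blk H := S.pick (S.st k)

def nseq (k : ℕ) : ℕ := (S.st k).1

lemma blk_good (k : ℕ) : S.Good (S.nseq k) (S.st k).2 (S.blk k) := S.pick_spec (S.st k)

lemma nseq_succ (k : ℕ) : S.nseq (k+1) = (S.blk k).q + 1 := rfl

lemma ws_succ (k : ℕ) : (S.st (k+1)).2 = (S.st k).2 ++ [(S.blk k).w] := rfl

lemma mem_ws {i k : ℕ} (h : i < k) : (S.blk i).w ∈ (S.st k).2 := by
  induction k with
  | zero => omega
  | succ k ih =>
    rw [ws_succ]
    rcases Nat.lt_or_ge i k with h1 | h1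
    · exact List.mem_append_left _ (ih h1)
    · have : i = k := by omega
      subst this
      exact List.mem_append_right _ (List.mem_singleton.mpr rfl)

lemma nseq_lt_succ (k : ℕ) : S.nseq k < S.nseq (k+1) := by
  have h1 := (S.blk_good k).1
  rw [nseq_succ]
  omega

lemma nseq_mono : StrictMono S.nseq := strictMono_nat_of_lt_succ S.nseq_lt_succ

/-- vectors supported in successive disjoint windows are orthogonal. -/
lemma orth_windows {a b a' b' : ℕ} (hab : a ≤ b) (h : b ≤ a') (hab' : a' ≤ b') {z z' : H}
    (hz : S.E a b z = z) (hz' : S.E a' b' z' = z') : ⟪z, z'⟫ = 0 := by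
  conv_lhs => rw [← hz, ← hz']
  rw [sa_inner (S.Esa a b)]
  rw [mul_apply_zero (S.EE_zero hab h hab').1 z']
  exact inner_zero_right _

/-- an orthonormal family from unit vectors in successive windows. -/
lemma onFamily {z : ℕ → H} {a b : ℕ → ℕ} (hab : ∀ k, a k ≤ b k)
    (hsep : ∀ j k, j < k → b j ≤ a k)
    (hz : ∀ k, S.E (a k) (b k) (z k) = z k) (hn : ∀ k, ‖z k‖ = 1) :
    Orthonormal ℂ z := by
  constructor
  · exact hn
  · intro j k hjk
    rcases Nat.lt_or_ge j k with h1 | h1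
    · exact S.orth_windows (hab j) (hsep j k h1) (hab k) (hz j) (hz k)
    · have h2 : k < j := by omega
      have := S.orth_windows (hab k) (hsep k j h2) (hab j) (hz k) (hz j)
      rw [← inner_conj_symm, this, map_zero]

/-- membership in the nest algebra of a synthesis operator whose outputs `x k` are below
cut `κ k` and whose test vectors `w k` are above it. -/
lemma synth_mem {w x : ℕ → H} {κ : ℕ → ℕ} {T : H →L[ℂ] H}
    (hT : ∀ h : H, HasSum (fun k => ⟪w k, h⟫ • x k) (T h))
    (hx : ∀ k, S.M (κ k) (x k) = x k) (hw : ∀ k, S.M (κ k) (w k) = 0) :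
    T ∈ nestAlgebra 𝒩 := by
  have hmem : ∀ P ∈ 𝒩.carrier, (1 - P) * T * P = 0 := by
    intro P hP
    ext h
    have h1 : ((1 - P) * T * P) h = (1 - P) ((T (P h))) := by
      simp [ContinuousLinearMap.mul_apply]
    rw [h1]
    have h2 : HasSum (fun k => (1 - P) (⟪w k, P h⟫ • x k)) ((1 - P) (T (P h))) :=
      (hT (P h)).mapL (1 - P)
    have h3 : ∀ k, (1 - P) (⟪w k, P h⟫ • x k) = 0 := by
      intro k
      rcases 𝒩.chain P hP (S.M (κ k)) (S.hMmem (κ k)) with hc | hc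
      -- hc : M κ * P = P, i.e. P ≤ M κ : kill the test vector
      · have hPM : P * S.M (κ k) = P := by
          have := congrArg star hc
          rwa [star_mul, (S.Msa (κ k)).star_eq, (𝒩.isProj P hP).1.star_eq] at this
        have h4 : P (w k) = 0 := by
          calc P (w k) = P (S.M (κ k) (w k)) := by
                rw [mul_apply_eq hPM (w k)]
            _ = P 0 := by rw [hw k]
            _ = 0 := map_zero _
        have h5 : ⟪w k, P h⟫ = 0 := by
          rw [← sa_inner (𝒩.isProj P hP).1, h4, inner_zero_left]
        rw [h5, zero_smul, map_zero]
      -- hc : P * M κ = M κ, i.e. M κ ≤ P : the output is already below P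
      · have h6 : P (x k) = x k := by
          calc P (x k) = P (S.M (κ k) (x k)) := by rw [hx k]
            _ = S.M (κ k) (x k) := mul_apply_eq hc (x k)
            _ = x k := hx k
        rw [ContinuousLinearMap.map_smul]
        rw [show (1 - P) (x k) = x k - P (x k) by
          simp [ContinuousLinearMap.sub_apply]]
        rw [h6, sub_self, smul_zero]
    rw [funext h3] at h2
    have h9 := h2.unique hasSum_zero
    simp [h9]
  exact hmem

end Setup


/-- if `X ∈ T(𝒩)` and `X ∉ I⁻_{N₀}` where `N₀ = N₀⁻ > 0` (witnessed by a
strictly increasing sequence `M_n` of nest projections converging strongly to `N₀`),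
then there are `A, B ∈ T(𝒩)` and a sequence `N_k` in `𝒩` strictly increasing to `N₀`
such that `AXB` is the (strong) sum of its diagonal blocks
`(N_{k+1} - N_k) AXB (N_{k+1} - N_k)`, each of norm greater than `1`. -/
theorem statement13 (𝒩 : Nest H) (N₀ : H →L[ℂ] H) (hN₀ : N₀ ∈ 𝒩.carrier)
    (hN₀ne : N₀ ≠ 0) (M : ℕ → H →L[ℂ] H) (hMmem : ∀ n, M n ∈ 𝒩.carrier)
    (hMmono : ∀ n, projLT (M n) (M (n + 1))) (hMlt : ∀ n, projLT (M n) N₀)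
    (hMconv : ∀ h : H, Filter.Tendsto (fun n => M n h) Filter.atTop (nhds (N₀ h)))
    (X : H →L[ℂ] H) (hX : X ∈ nestAlgebra 𝒩) (hXnot : iMinus 𝒩 N₀ X ≠ 0) :
    ∃ A ∈ nestAlgebra 𝒩, ∃ B ∈ nestAlgebra 𝒩, ∃ Nk : ℕ → H →L[ℂ] H,
      (∀ k, Nk k ∈ 𝒩.carrier) ∧ (∀ k, projLT (Nk k) (Nk (k + 1))) ∧
      (∀ k, projLT (Nk k) N₀) ∧
      (∀ h : H, Filter.Tendsto (fun k => Nk k h) Filter.atTop (nhds (N₀ h))) ∧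
      (∀ h : H,
        HasSum (fun k => ((Nk (k + 1) - Nk k) * (A * X * B) * (Nk (k + 1) - Nk k)) h)
          ((A * X * B) h)) ∧
      ∀ k, 1 < ‖(Nk (k + 1) - Nk k) * (A * X * B) * (Nk (k + 1) - Nk k)‖ := by
  classical
  -- the infimum is positive and bounds all tail compressions from below
  set Sset : Set ℝ :=
    {r | ∃ M' ∈ 𝒩.carrier, projLT M' N₀ ∧ r = ‖(N₀ - M') * X * (N₀ - M')‖} with hSset
  have hne : Sset.Nonempty := ⟨_, M 0, hMmem 0, hMlt 0, rfl⟩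
  have hbdd : BddBelow Sset := by
    refine ⟨0, fun r hr => ?_⟩
    obtain ⟨M', _, _, hr⟩ := hr
    rw [hr]; positivity
  have hε0 : 0 ≤ iMinus 𝒩 N₀ X := by
    refine le_csInf hne fun r hr => ?_
    obtain ⟨M', _, _, hr⟩ := hr
    rw [hr]; positivity
  have hεpos : 0 < iMinus 𝒩 N₀ X := lt_of_le_of_ne hε0 (Ne.symm hXnot)
  set ε : ℝ := iMinus 𝒩 N₀ X with hεdef
  have htail0 : ∀ n, ε ≤ ‖(N₀ - M n) * X * (N₀ - M n)‖ := fun n =>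
    csInf_le hbdd ⟨M n, hMmem n, hMlt n, rfl⟩
  -- the scaled operator
  set γ : ℝ := 2/ε with hγdef
  have hγpos : 0 < γ := by rw [hγdef]; positivity
  set X' : H →L[ℂ] H := (γ:ℂ) • X with hX'def
  have hX'mem : X' ∈ nestAlgebra 𝒩 := Subalgebra.smul_mem _ hX _
  have htailX' : ∀ n, 2 ≤ ‖(N₀ - M n) * X' * (N₀ - M n)‖ := by
    intro n
    have h1 : (N₀ - M n) * X' * (N₀ - M n) = (γ:ℂ) • ((N₀ - M n) * X * (N₀ - M n)) := by
      rw [hX'def, mul_smul_comm, smul_mul_assoc]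
    rw [h1, norm_smul, Complex.norm_real, Real.norm_eq_abs, abs_of_pos hγpos]
    calc (2:ℝ) = γ * ε := by rw [hγdef]; field_simp
      _ ≤ γ * ‖(N₀ - M n) * X * (N₀ - M n)‖ :=
          mul_le_mul_of_nonneg_left (htail0 n) hγpos.le
  -- bundle everything into a `Setup`
  set S : Setup 𝒩 := ⟨N₀, M, X', hN₀, hMmem, hMmono, hMlt, hMconv, hX'mem, htailX'⟩
    with hSdef
  set n : ℕ → ℕ := S.nseq with hndef
  set xf : ℕ → H := fun k => (S.blk k).x with hxfdef
  set wf : ℕ → H := fun k => (S.blk k).w with hwfdef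
  set vf : ℕ → H := fun k => (S.blk k).v with hvfdef
  set yf : ℕ → H := fun k => (S.blk k).y with hyfdef
  set qf : ℕ → ℕ := fun k => (S.blk k).q with hqfdef
  set cf : ℕ → ℝ := fun k => (S.blk k).c with hcfdef
  have hg : ∀ k, S.Good (n k) (S.st k).2 (S.blk k) := S.blk_good
  have hq : ∀ k, n k + 1 < qf k := fun k => (hg k).1
  have hx : ∀ k, S.E (n k) (n k+1) (xf k) = xf k := fun k => (hg k).2.1
  have hxn : ∀ k, ‖xf k‖ = 1 := fun k => (hg k).2.2.1
  have hv : ∀ k, S.E (n k+1) (qf k) (vf k) = vf k := fun k => (hg k).2.2.2.1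
  have hvn : ∀ k, ‖vf k‖ = 1 := fun k => (hg k).2.2.2.2.1
  have hw : ∀ k, S.E (n k+1) (qf k) (wf k) = wf k := fun k => (hg k).2.2.2.2.2.1
  have hwn : ∀ k, ‖wf k‖ = 1 := fun k => (hg k).2.2.2.2.2.2.1
  have hperp : ∀ k, ∀ z ∈ (S.st k).2, ⟪z, X' (vf k)⟫ = 0 := fun k =>
    (hg k).2.2.2.2.2.2.2.1
  have hc1 : ∀ k, 1 < cf k := fun k => (hg k).2.2.2.2.2.2.2.2.1
  have hcin : ∀ k, ⟪wf k, X' (vf k)⟫ = (cf k : ℂ) := fun k =>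
    (hg k).2.2.2.2.2.2.2.2.2.1
  have hy : ∀ k, S.E (qf k) (qf k+1) (yf k) = yf k := fun k =>
    (hg k).2.2.2.2.2.2.2.2.2.2.1
  have hyn : ∀ k, ‖yf k‖ = 1 := fun k => (hg k).2.2.2.2.2.2.2.2.2.2.2
  have hnsucc : ∀ k, n (k+1) = qf k + 1 := S.nseq_succ
  have hnmono : StrictMono n := S.nseq_mono
  -- useful inequalities
  have hle1 : ∀ k, n k + 1 ≤ n (k+1) := by
    intro k; rw [hnsucc k]; have := hq k; omega
  have hle2 : ∀ k, qf k ≤ n (k+1) := by intro k; rw [hnsucc k]; omega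
  have hsepx : ∀ j k, j < k → n j + 1 ≤ n k := by
    intro j k hjk
    calc n j + 1 ≤ n (j+1) := hle1 j
      _ ≤ n k := hnmono.monotone hjk
  have hsepw : ∀ j k, j < k → qf j ≤ n k + 1 := by
    intro j k hjk
    calc qf j ≤ n (j+1) := hle2 j
      _ ≤ n k := hnmono.monotone hjk
      _ ≤ n k + 1 := Nat.le_succ _
  have hsepy : ∀ j k, j < k → n (j+1) ≤ qf k := by
    intro j k hjk
    calc n (j+1) ≤ n k := hnmono.monotone hjk
      _ ≤ qf k := by have := hq k; omega
  -- the windows of the `y` family, rewritten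
  have hy' : ∀ k, S.E (qf k) (n (k+1)) (yf k) = yf k := by
    intro k; rw [hnsucc k]; exact hy k
  -- orthonormal families
  have honx : Orthonormal ℂ xf :=
    S.onFamily (a := n) (b := fun k => n k + 1) (fun k => Nat.le_succ _)
      hsepx hx hxn
  have honw : Orthonormal ℂ wf :=
    S.onFamily (a := fun k => n k + 1) (b := qf) (fun k => (hq k).le)
      hsepw hw hwn
  have honv : Orthonormal ℂ vf :=
    S.onFamily (a := fun k => n k + 1) (b := qf) (fun k => (hq k).le)
      hsepw hv hvn
  have hony : Orthonormal ℂ yf :=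
    S.onFamily (a := qf) (b := fun k => n (k+1)) (fun k => hle2 k)
      (fun j k hjk => hsepy j k hjk) hy' hyn
  -- the synthesis operators
  obtain ⟨TA, hTA, _⟩ := exists_synthOp honw honx
  obtain ⟨TB, hTB, _⟩ := exists_synthOp hony honv
  -- membership in the nest algebra
  have hTAmem : TA ∈ nestAlgebra 𝒩 := by
    refine S.synth_mem (κ := fun k => n k + 1) hTA (fun k => ?_) (fun k => ?_)
    · conv_lhs => rw [← hx k]
      rw [Setup.mul_apply_eq (S.ME_abs (Nat.le_succ (n k))).1, hx k]
    · conv_lhs => rw [← hw k]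
      rw [Setup.mul_apply_zero (S.ME_zero (le_refl (n k + 1)) (hq k).le).1]
  have hTBmem : TB ∈ nestAlgebra 𝒩 := by
    refine S.synth_mem (κ := qf) hTB (fun k => ?_) (fun k => ?_)
    · conv_lhs => rw [← hv k]
      rw [Setup.mul_apply_eq (S.ME_abs (hq k).le).1, hv k]
    · conv_lhs => rw [← hy k]
      rw [Setup.mul_apply_zero (S.ME_zero (le_refl (qf k)) (Nat.le_succ _)).1]
  -- the final operators
  set A : H →L[ℂ] H := (γ:ℂ) • TA with hAdef
  have hAmem : A ∈ nestAlgebra 𝒩 := Subalgebra.smul_mem _ hTAmem _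
  have hABX : A * X * TB = TA * X' * TB := by
    rw [hAdef, hX'def, smul_mul_assoc, smul_mul_assoc, mul_smul_comm, smul_mul_assoc]
  -- cross terms vanish
  have hMv : ∀ j, S.M (qf j) (vf j) = vf j := by
    intro j
    conv_lhs => rw [← hv j]
    rw [Setup.mul_apply_eq (S.ME_abs (hq j).le).1, hv j]
  have hXinvv : ∀ j, S.M (qf j) (X' (vf j)) = X' (vf j) := by
    intro j
    have h1 := Setup.mul_apply_eq' (S.Xinv (S.M (qf j)) (hMmem (qf j))).symm (vf j)
    -- h1 : X' (M qf j (vf j)) = M qf j (X' (M qf j (vf j)))  (careful with direction)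
    have h2 := Setup.mul_apply_eq (S.Xinv (S.M (qf j)) (hMmem (qf j))) (vf j)
    -- h2 : M (qf j) ((X' * M (qf j)) (vf j)) = (X' * M (qf j)) (vf j)
    have h3 : (S.X * S.M (qf j)) (vf j) = X' (vf j) := by
      show S.X (S.M (qf j) (vf j)) = X' (vf j)
      rw [hMv j]
    rw [← h3]
    exact h2
  have hcross : ∀ k j, j ≠ k → ⟪wf k, X' (vf j)⟫ = 0 := by
    intro k j hjk
    rcases Nat.lt_or_ge k j with h1 | h1
    · exact hperp j (wf k) (S.mem_ws h1)
    · have h2 : j < k := by omega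
      have h3 : S.M (qf j) (wf k) = 0 := by
        conv_lhs => rw [← hw k]
        rw [Setup.mul_apply_zero (S.ME_zero (hsepw j k h2) (hq k).le).1]
      rw [← hXinvv j, ← sa_inner (S.Msa (qf j)), h3, inner_zero_left]
  -- evaluation of the composite operator
  have hkeyEval : ∀ (h : H) (k : ℕ), ⟪wf k, X' (TB h)⟫ = ⟪yf k, h⟫ * (cf k : ℂ) := by
    intro h k
    have h1 : HasSum (fun j => X' (⟪yf j, h⟫ • vf j)) (X' (TB h)) := (hTB h).mapL X'
    have h2 := h1.mapL (innerSL ℂ (wf k))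
    have h3 : (fun j => (innerSL ℂ (wf k)) (X' (⟪yf j, h⟫ • vf j)))
        = fun j => if j = k then ⟪yf k, h⟫ * (cf k : ℂ) else 0 := by
      funext j
      simp only [innerSL_apply_apply, map_smul, inner_smul_right, smul_eq_mul]
      by_cases hjk : j = k
      · subst hjk; rw [if_pos rfl, hcin j]
      · rw [if_neg hjk, hcross k j hjk, mul_zero]
    rw [h3] at h2
    exact h2.unique (hasSum_ite_eq k _)
  have hmain : ∀ h : H,
      HasSum (fun k => (⟪yf k, h⟫ * (cf k : ℂ)) • xf k) (TA (X' (TB h))) := by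
    intro h
    have h1 := hTA (X' (TB h))
    have h2 : (fun k => ⟪wf k, X' (TB h)⟫ • xf k)
        = fun k => (⟪yf k, h⟫ * (cf k : ℂ)) • xf k := by
      funext k; rw [hkeyEval h k]
    rwa [h2] at h1
  -- the block operators
  have hExj : ∀ k j, S.E (n k) (n (k+1)) (xf j) = if j = k then xf j else 0 := by
    intro k j
    rcases lt_trichotomy j k with h1 | h1 | h1
    · rw [if_neg (by omega)]
      conv_lhs => rw [← hx j]
      rw [Setup.mul_apply_zero (S.EE_zero (Nat.le_succ (n j)) (hsepx j k h1)
        (hnmono (Nat.lt_succ_self k)).le).2]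
    · subst h1
      rw [if_pos rfl]
      conv_lhs => rw [← hx j]
      rw [Setup.mul_apply_eq (S.E_absorb_left (Nat.le_succ (n j)) (hle1 j)), hx j]
    · rw [if_neg (by omega)]
      conv_lhs => rw [← hx j]
      have hkj : n (k+1) ≤ n j := hnmono.monotone h1
      rw [Setup.mul_apply_zero (S.EE_zero (hnmono (Nat.lt_succ_self k)).le hkj
        (Nat.le_succ (n j))).1]
  have hEyj : ∀ k j, S.E (n k) (n (k+1)) (yf j) = if j = k then yf j else 0 := by
    intro k j
    rcases lt_trichotomy j k with h1 | h1 | h1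
    · rw [if_neg (by omega)]
      conv_lhs => rw [← hy' j]
      rw [Setup.mul_apply_zero (S.EE_zero (hle2 j) (hnmono.monotone h1)
        (hnmono (Nat.lt_succ_self k)).le).2]
    · subst h1
      rw [if_pos rfl]
      conv_lhs => rw [← hy' j]
      rw [Setup.mul_apply_eq (S.E_absorb_right (by have := hq j; omega) (hle2 j)), hy' j]
    · rw [if_neg (by omega)]
      conv_lhs => rw [← hy' j]
      have hkj : n (k+1) ≤ qf j := by
        calc n (k+1) ≤ n j := hnmono.monotone h1
          _ ≤ qf j := by have := hq j; omega
      rw [Setup.mul_apply_zero (S.EE_zero (hnmono (Nat.lt_succ_self k)).le hkj (hle2 j)).1]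
  have hblock : ∀ (k : ℕ) (h : H),
      (S.E (n k) (n (k+1)) * (A * X * TB) * S.E (n k) (n (k+1))) h
        = (⟪yf k, h⟫ * (cf k : ℂ)) • xf k := by
    intro k h
    have h1 : (S.E (n k) (n (k+1)) * (A * X * TB) * S.E (n k) (n (k+1))) h
        = S.E (n k) (n (k+1)) ((TA (X' (TB (S.E (n k) (n (k+1)) h))))) := by
      rw [hABX]
      simp [ContinuousLinearMap.mul_apply]
    rw [h1]
    have h2 := (hmain (S.E (n k) (n (k+1)) h)).mapL (S.E (n k) (n (k+1)))
    have h3 : (fun j => (S.E (n k) (n (k+1))) ((⟪yf j, S.E (n k) (n (k+1)) h⟫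
        * (cf j : ℂ)) • xf j))
        = fun j => if j = k then (⟪yf k, h⟫ * (cf k : ℂ)) • xf k else 0 := by
      funext j
      rw [map_smul]
      by_cases hjk : j = k
      · subst hjk
        rw [if_pos rfl]
        have h4 : S.E (n j) (n (j+1)) (xf j) = xf j := by
          rw [hExj j j, if_pos rfl]
        have h6 : S.E (n j) (n (j+1)) (yf j) = yf j := by
          rw [hEyj j j, if_pos rfl]
        rw [h4, ← sa_inner (S.Esa (n j) (n (j+1))) (yf j) h, h6]
      · rw [if_neg hjk]
        have h5 : S.E (n k) (n (k+1)) (xf j) = 0 := by rw [hExj k j, if_neg hjk]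
        rw [h5, smul_zero]
    rw [h3] at h2
    exact h2.unique (hasSum_ite_eq k _)
  -- conclusion
  refine ⟨A, hAmem, TB, hTBmem, fun k => M (n k), fun k => hMmem (n k),
    fun k => S.projLT_M (hnmono (Nat.lt_succ_self k)), fun k => hMlt (n k),
    fun h => (hMconv h).comp hnmono.tendsto_atTop, ?_, ?_⟩
  · intro h
    have h1 := hmain h
    have h2 : (fun k => (⟪yf k, h⟫ * (cf k : ℂ)) • xf k)
        = fun k => ((M (n (k+1)) - M (n k)) * (A * X * TB) * (M (n (k+1)) - M (n k))) h := by
      funext k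
      rw [← hblock k h]
      rfl
    rw [h2] at h1
    have h3 : (A * X * TB) h = TA (X' (TB h)) := by
      rw [hABX]; simp [ContinuousLinearMap.mul_apply]
    rwa [← h3] at h1
  · intro k
    have h1 : ((M (n (k+1)) - M (n k)) * (A * X * TB) * (M (n (k+1)) - M (n k))) (yf k)
        = (⟪yf k, yf k⟫ * (cf k : ℂ)) • xf k := hblock k (yf k)
    have h2 : (⟪yf k, yf k⟫ : ℂ) = 1 := by
      rw [inner_self_eq_norm_sq_to_K, hyn k]
      norm_num
    rw [h2, one_mul] at h1
    have h3 : ‖((M (n (k+1)) - M (n k)) * (A * X * TB) * (M (n (k+1)) - M (n k))) (yf k)‖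
        = cf k := by
      rw [h1, norm_smul, Complex.norm_real, Real.norm_eq_abs,
        abs_of_pos (lt_trans one_pos (hc1 k)), hxn k, mul_one]
    have h4 := ContinuousLinearMap.le_opNorm
      ((M (n (k+1)) - M (n k)) * (A * X * TB) * (M (n (k+1)) - M (n k))) (yf k)
    rw [h3, hyn k, mul_one] at h4
    exact lt_of_lt_of_le (hc1 k) h4
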